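/- (Laplacian of the P-function) Let N ≥ 2, p > 1, U ⊆ ℝ^N open, u : U → ℝ of class C³, and define P := (2(p−1)/p) |∇u|^p + (2/N) u. Then at every point x ∈ U with ∇u(x) ≠ 0, ΔP(x) = 2 { (p−1) |∇u(x)|^{p−2} [ (p−2) ‖D²u(x) (∇u(x)/|∇u(x)|)‖² + ‖D²u(x)‖² + ⟨∇u(x), ∇(Δu)(x)⟩ ] + Δu(x)/N }, where ‖D²u‖ is the Frobenius norm of the Hessian and ‖D²u e‖ is the Euclidean norm of the vector D²u e. -/

import Mathlib

open Matrix Real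

/-- The Hessian matrix of `u` at `x`: entry `(i,j)` is `∂²u/∂xᵢ∂xⱼ`. -/
noncomputable def hess {N : ℕ} (u : EuclideanSpace ℝ (Fin N) → ℝ) (x : EuclideanSpace ℝ (Fin N)) :
    Matrix (Fin N) (Fin N) ℝ :=
  fun i j => gradient (fun y => gradient u y j) x i

/-- The square of the Frobenius norm of a matrix. -/
noncomputable def frobSq {n : ℕ} (A : Matrix (Fin n) (Fin n) ℝ) : ℝ :=
  ∑ i, ∑ j, (A i j)^2

noncomputable def pd {N : ℕ} (i : Fin N) (f : EuclideanSpace ℝ (Fin N) → ℝ)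
    (x : EuclideanSpace ℝ (Fin N)) : ℝ :=
  fderiv ℝ f x (EuclideanSpace.single i 1)

lemma gradient_apply_eq {N : ℕ} (f : EuclideanSpace ℝ (Fin N) → ℝ) (x : EuclideanSpace ℝ (Fin N))
    (i : Fin N) : gradient f x i = pd i f x := by
  have : gradient f x i = inner ℝ (gradient f x) (EuclideanSpace.single i (1:ℝ)) := by
    rw [real_inner_comm, EuclideanSpace.inner_single_left]; simp
  rw [this, gradient, InnerProductSpace.toDual_symm_apply]; rfl

lemma hess_eq_pd {N : ℕ} (f : EuclideanSpace ℝ (Fin N) → ℝ) (x : EuclideanSpace ℝ (Fin N))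
    (i j : Fin N) : hess f x i j = pd i (pd j f) x := by
  unfold hess
  rw [gradient_apply_eq]
  congr 1
  funext y
  rw [gradient_apply_eq]

lemma pd_contDiffOn {N : ℕ} {U : Set (EuclideanSpace ℝ (Fin N))} (hU : IsOpen U)
    {f : EuclideanSpace ℝ (Fin N) → ℝ} {n m : WithTop ℕ∞} (hf : ContDiffOn ℝ n f U)
    (h : m + 1 ≤ n) (i : Fin N) : ContDiffOn ℝ m (pd i f) U :=
  (hf.fderiv_of_isOpen hU h).clm_apply contDiffOn_const

lemma pd_pd_eq {N : ℕ} {f : EuclideanSpace ℝ (Fin N) → ℝ} {y : EuclideanSpace ℝ (Fin N)}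
    (hf : DifferentiableAt ℝ (fderiv ℝ f) y) (j k : Fin N) :
    pd j (pd k f) y = fderiv ℝ (fderiv ℝ f) y (EuclideanSpace.single j 1)
      (EuclideanSpace.single k 1) := by
  unfold pd
  rw [fderiv_clm_apply hf (differentiableAt_const _)]
  simp

/-- symmetry of second partials for a C² (at y) function -/
lemma pd_pd_symm {N : ℕ} {f : EuclideanSpace ℝ (Fin N) → ℝ} {y : EuclideanSpace ℝ (Fin N)}
    (hf : ContDiffAt ℝ 2 f y) (j k : Fin N) :
    pd j (pd k f) y = pd k (pd j f) y := by
  have hd : DifferentiableAt ℝ (fderiv ℝ f) y :=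
    (hf.fderiv_right (m := 1) (by norm_num)).differentiableAt one_ne_zero
  rw [pd_pd_eq hd, pd_pd_eq hd]
  exact (hf.isSymmSndFDerivAt (by norm_num)) _ _

lemma norm_grad_sq {N : ℕ} (u : EuclideanSpace ℝ (Fin N) → ℝ) (y : EuclideanSpace ℝ (Fin N)) :
    ‖gradient u y‖^2 = ∑ k, (pd k u y)^2 := by
  rw [EuclideanSpace.norm_eq, sq_sqrt (by positivity)]
  exact Finset.sum_congr rfl fun k _ => by rw [Real.norm_eq_abs, sq_abs, gradient_apply_eq]

lemma norm_grad_rpow {N : ℕ} (u : EuclideanSpace ℝ (Fin N) → ℝ) (y : EuclideanSpace ℝ (Fin N))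
    (q : ℝ) : ‖gradient u y‖ ^ q = (∑ k, (pd k u y)^2) ^ (q/2) := by
  rw [← norm_grad_sq, ← Real.rpow_natCast ‖gradient u y‖ 2, ← Real.rpow_mul (norm_nonneg _)]
  congr 1
  push_cast
  ring

section
variable {N : ℕ} {U : Set (EuclideanSpace ℝ (Fin N))} {u P : EuclideanSpace ℝ (Fin N) → ℝ} {p : ℝ}

lemma phi_hasFDerivAt (hU : IsOpen U) (hu : ContDiffOn ℝ 3 u U)
    {y : EuclideanSpace ℝ (Fin N)} (hy : y ∈ U) :
    HasFDerivAt (fun z => ∑ k, (pd k u z)^2)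
      (∑ k, (2 * pd k u y) • fderiv ℝ (pd k u) y) y := by
  refine HasFDerivAt.fun_sum fun k _ => ?_
  have hgd : HasFDerivAt (pd k u) (fderiv ℝ (pd k u) y) y :=
    (((pd_contDiffOn hU hu (by norm_num : (2:WithTop ℕ∞) + 1 ≤ 3) k).contDiffAt
      (hU.mem_nhds hy)).differentiableAt (by norm_num)).hasFDerivAt
  have h2 : (fun z => (pd k u z)^2) = fun z => pd k u z * pd k u z := by
    funext z; ring
  rw [h2, two_mul, add_smul]
  exact hgd.mul hgd

lemma fderiv_P_eq (hU : IsOpen U) (hu : ContDiffOn ℝ 3 u U) (hp : 1 < p)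
    (hP : ∀ y, P y = (2*(p-1)/p) * ‖gradient u y‖ ^ p + (2/(N:ℝ)) * u y)
    {y : EuclideanSpace ℝ (Fin N)} (hy : y ∈ U) (hgy : gradient u y ≠ 0) (j : Fin N) :
    pd j P y = 2*(p-1) * ((∑ k, (pd k u y)^2) ^ (p/2 - 1)
        * (∑ k, pd k u y * pd j (pd k u) y))
      + (2/(N:ℝ)) * pd j u y := by
  have hp0 : p ≠ 0 := by linarith
  have hφd := phi_hasFDerivAt hU hu hy
  have hφpos : 0 < ∑ k, (pd k u y)^2 := by
    rw [← norm_grad_sq]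
    exact pow_pos (norm_pos_iff.mpr hgy) 2
  have hud : HasFDerivAt u (fderiv ℝ u y) y :=
    ((hu.contDiffAt (hU.mem_nhds hy)).differentiableAt (by norm_num)).hasFDerivAt
  have hr : HasDerivAt (fun t : ℝ => t ^ (p/2))
      ((p/2) * (∑ k, (pd k u y)^2) ^ (p/2 - 1)) (∑ k, (pd k u y)^2) :=
    Real.hasDerivAt_rpow_const (Or.inl hφpos.ne')
  have hQ := hr.comp_hasFDerivAt y hφd
  have hPdef : P = fun z => (2*(p-1)/p) * (∑ k, (pd k u z)^2) ^ (p/2) + (2/(N:ℝ)) * u z := by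
    funext z; rw [hP z, norm_grad_rpow]
  have hPd : HasFDerivAt P ((2*(p-1)/p) • (((p/2) * (∑ k, (pd k u y)^2) ^ (p/2 - 1)) •
      (∑ k, (2 * pd k u y) • fderiv ℝ (pd k u) y)) + (2/(N:ℝ)) • fderiv ℝ u y) y := by
    rw [hPdef]
    exact (hQ.const_mul _).add (hud.const_mul _)
  have hev : pd j P y = ((2*(p-1)/p) • (((p/2) * (∑ k, (pd k u y)^2) ^ (p/2 - 1)) •
      (∑ k, (2 * pd k u y) • fderiv ℝ (pd k u) y)) + (2/(N:ℝ)) • fderiv ℝ u y)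
      (EuclideanSpace.single j 1) := by
    have h0 : pd j P y = fderiv ℝ P y (EuclideanSpace.single j 1) := rfl
    rw [h0, hPd.fderiv]
  rw [hev]
  simp only [ContinuousLinearMap.add_apply, ContinuousLinearMap.smul_apply,
    ContinuousLinearMap.coe_sum', Finset.sum_apply, smul_eq_mul, Finset.mul_sum]
  have : ∀ k : Fin N, (fderiv ℝ (pd k u) y) (EuclideanSpace.single j 1) = pd j (pd k u) y :=
    fun k => rfl
  simp only [this]
  have hfj : (fderiv ℝ u y) (EuclideanSpace.single j 1) = pd j u y := rfl
  rw [hfj]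
  congr 1
  refine Finset.sum_congr rfl fun k _ => ?_
  field_simp

lemma hessP_diag (hU : IsOpen U) (hu : ContDiffOn ℝ 3 u U) (hp : 1 < p)
    (hP : ∀ y, P y = (2*(p-1)/p) * ‖gradient u y‖ ^ p + (2/(N:ℝ)) * u y)
    {x : EuclideanSpace ℝ (Fin N)} (hx : x ∈ U) (hg : gradient u x ≠ 0) (i : Fin N) :
    pd i (pd i P) x =
      2*(p-1)*(p-2) * ((∑ k, (pd k u x)^2) ^ (p/2-2))
          * (∑ k, pd k u x * pd i (pd k u) x)^2
      + 2*(p-1) * ((∑ k, (pd k u x)^2) ^ (p/2-1))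
          * (∑ k, ((pd i (pd k u) x)^2 + pd k u x * pd i (pd i (pd k u)) x))
      + (2/(N:ℝ)) * pd i (pd i u) x := by
  -- the open set where the formula for pd i P holds
  have hc : ContinuousOn (fun y => gradient u y) U := by
    have h1 := hu.continuousOn_fderiv_of_isOpen hU (by norm_num : (1:WithTop ℕ∞) ≤ 3)
    exact (InnerProductSpace.toDual ℝ _).symm.continuous.comp_continuousOn h1
  have hVopen : IsOpen (U ∩ (fun y => gradient u y) ⁻¹' {0}ᶜ) :=
    hc.isOpen_inter_preimage hU isOpen_compl_singleton
  have hxV : x ∈ U ∩ (fun y => gradient u y) ⁻¹' {0}ᶜ := ⟨hx, hg⟩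
  have hEq : (fun y => pd i P y) =ᶠ[nhds x] (fun y =>
      2*(p-1) * ((∑ k, (pd k u y)^2) ^ (p/2 - 1) * (∑ k, pd k u y * pd i (pd k u) y))
        + (2/(N:ℝ)) * pd i u y) := by
    filter_upwards [hVopen.mem_nhds hxV] with y hy
    exact fderiv_P_eq hU hu hp hP hy.1 hy.2 i
  -- differentiability data at x
  have hgd : ∀ k : Fin N, HasFDerivAt (pd k u) (fderiv ℝ (pd k u) x) x := fun k =>
    (((pd_contDiffOn hU hu (by norm_num : (2:WithTop ℕ∞) + 1 ≤ 3) k).contDiffAt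
      (hU.mem_nhds hx)).differentiableAt (by norm_num)).hasFDerivAt
  have hhd : ∀ k : Fin N, HasFDerivAt (pd i (pd k u)) (fderiv ℝ (pd i (pd k u)) x) x := fun k =>
    (((pd_contDiffOn hU (pd_contDiffOn hU hu (by norm_num : (2:WithTop ℕ∞) + 1 ≤ 3) k)
      (by norm_num : (1:WithTop ℕ∞) + 1 ≤ 2) i).contDiffAt
      (hU.mem_nhds hx)).differentiableAt (by norm_num)).hasFDerivAt
  have hφd := phi_hasFDerivAt hU hu hx
  have hφpos : 0 < ∑ k, (pd k u x)^2 := by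
    rw [← norm_grad_sq]
    exact pow_pos (norm_pos_iff.mpr hg) 2
  have hB : HasFDerivAt (fun z => (∑ k, (pd k u z)^2) ^ (p/2-1))
      (((p/2-1) * (∑ k, (pd k u x)^2) ^ (p/2-1-1)) •
        (∑ k, (2 * pd k u x) • fderiv ℝ (pd k u) x)) x := by
    have hr : HasDerivAt (fun t : ℝ => t ^ (p/2-1))
        ((p/2-1) * (∑ k, (pd k u x)^2) ^ (p/2-1-1)) (∑ k, (pd k u x)^2) :=
      Real.hasDerivAt_rpow_const (Or.inl hφpos.ne')
    have hQ := hr.comp_hasFDerivAt x hφd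
    exact hQ
  have hT : HasFDerivAt (fun y => ∑ k, pd k u y * pd i (pd k u) y)
      (∑ k, (pd k u x • fderiv ℝ (pd i (pd k u)) x
        + pd i (pd k u) x • fderiv ℝ (pd k u) x)) x :=
    HasFDerivAt.fun_sum fun k _ => (hgd k).mul (hhd k)
  have hF : HasFDerivAt (fun y =>
      2*(p-1) * ((∑ k, (pd k u y)^2) ^ (p/2 - 1) * (∑ k, pd k u y * pd i (pd k u) y))
        + (2/(N:ℝ)) * pd i u y)
      ((2*(p-1)) • (((∑ k, (pd k u x)^2) ^ (p/2-1)) •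
          (∑ k, (pd k u x • fderiv ℝ (pd i (pd k u)) x
            + pd i (pd k u) x • fderiv ℝ (pd k u) x))
        + (∑ k, pd k u x * pd i (pd k u) x) •
          (((p/2-1) * (∑ k, (pd k u x)^2) ^ (p/2-1-1)) •
            (∑ k, (2 * pd k u x) • fderiv ℝ (pd k u) x)))
        + (2/(N:ℝ)) • fderiv ℝ (pd i u) x) x :=
    ((hB.mul hT).const_mul _).add ((hgd i).const_mul _)
  have h0 : pd i (pd i P) x = fderiv ℝ (fun y => pd i P y) x (EuclideanSpace.single i 1) := rfl
  rw [h0, hEq.fderiv_eq, hF.fderiv]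
  have happ1 : ∀ k : Fin N, (fderiv ℝ (pd k u) x) (EuclideanSpace.single i 1)
      = pd i (pd k u) x := fun k => rfl
  have happ2 : ∀ k : Fin N, (fderiv ℝ (pd i (pd k u)) x) (EuclideanSpace.single i 1)
      = pd i (pd i (pd k u)) x := fun k => rfl
  have happ3 : (fderiv ℝ (pd i u) x) (EuclideanSpace.single i 1) = pd i (pd i u) x := rfl
  simp only [ContinuousLinearMap.add_apply, ContinuousLinearMap.smul_apply,
    ContinuousLinearMap.coe_sum', Finset.sum_apply, smul_eq_mul, happ1, happ2, happ3]
  have e1 : p/2-1-1 = p/2-2 := by ring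
  rw [e1]
  have e2 : ∑ k : Fin N, 2 * pd k u x * pd i (pd k u) x
      = 2 * ∑ k : Fin N, pd k u x * pd i (pd k u) x := by
    rw [Finset.mul_sum]
    exact Finset.sum_congr rfl fun k _ => by ring
  rw [e2]
  have e3 : ∑ k : Fin N, (pd k u x * pd i (pd i (pd k u)) x
        + pd i (pd k u) x * pd i (pd k u) x)
      = ∑ k : Fin N, ((pd i (pd k u) x)^2 + pd k u x * pd i (pd i (pd k u)) x) :=
    Finset.sum_congr rfl fun k _ => by ring
  rw [e3]
  ring


lemma sym3a (hU : IsOpen U) (hu : ContDiffOn ℝ 3 u U)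
    {x : EuclideanSpace ℝ (Fin N)} (hx : x ∈ U) (i j k : Fin N) :
    pd i (pd j (pd k u)) x = pd j (pd i (pd k u)) x :=
  pd_pd_symm ((pd_contDiffOn hU hu (by norm_num : (2:WithTop ℕ∞) + 1 ≤ 3) k).contDiffAt
    (hU.mem_nhds hx)) i j

lemma sym3b (hU : IsOpen U) (hu : ContDiffOn ℝ 3 u U)
    {x : EuclideanSpace ℝ (Fin N)} (hx : x ∈ U) (i j k : Fin N) :
    pd i (pd j (pd k u)) x = pd i (pd k (pd j u)) x := by
  have hEq : (fun y => pd j (pd k u) y) =ᶠ[nhds x] (fun y => pd k (pd j u) y) := by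
    filter_upwards [hU.mem_nhds hx] with y hy
    exact pd_pd_symm ((hu.contDiffAt (hU.mem_nhds hy)).of_le (by norm_num)) j k
  have h0 : pd i (pd j (pd k u)) x
      = fderiv ℝ (fun y => pd j (pd k u) y) x (EuclideanSpace.single i 1) := rfl
  rw [h0, hEq.fderiv_eq]
  rfl

end

/-- **Laplacian of the `P`-function** (formula (2.10) of the paper). For a `C³` function `u` and
`P = (2(p-1)/p)|∇u|^p + (2/N)u`, at every non-critical point,
`ΔP = 2 {(p-1)|∇u|^{p-2} [(p-2)‖D²u (∇u/|∇u|)‖² + ‖D²u‖² + ⟨∇u, ∇Δu⟩] + Δu/N}`. -/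
theorem laplacian_P_function (N : ℕ) (hN : 2 ≤ N) (p : ℝ) (hp : 1 < p)
    (U : Set (EuclideanSpace ℝ (Fin N))) (hU : IsOpen U)
    (u : EuclideanSpace ℝ (Fin N) → ℝ) (hu : ContDiffOn ℝ 3 u U)
    (P : EuclideanSpace ℝ (Fin N) → ℝ)
    (hP : ∀ y, P y = (2 * (p - 1) / p) * ‖gradient u y‖ ^ p + (2 / (N : ℝ)) * u y)
    (x : EuclideanSpace ℝ (Fin N)) (hx : x ∈ U) (hg : gradient u x ≠ 0) :
    (hess P x).trace =
      2 * ((p - 1) * ‖gradient u x‖ ^ (p - 2) *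
            ((p - 2) *
                (∑ i, ((hess u x).mulVec (fun j => gradient u x j / ‖gradient u x‖) i) ^ 2) +
              frobSq (hess u x) +
              (fun i => gradient u x i) ⬝ᵥ
                (fun i => gradient (fun y => (hess u y).trace) x i)) +
          (hess u x).trace / (N : ℝ)) := by
  classical
  have hφpos : 0 < ∑ k, (pd k u x)^2 := by
    rw [← norm_grad_sq]
    exact pow_pos (norm_pos_iff.mpr hg) 2
  have hnrm : ‖gradient u x‖ ≠ 0 := norm_ne_zero_iff.mpr hg
  have hN0 : (N:ℝ) ≠ 0 := Nat.cast_ne_zero.mpr (by omega)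
  -- LHS: trace as a sum of diagonal second partials, then use the formula
  have hLHS : (hess P x).trace = ∑ i, pd i (pd i P) x := by
    simp [Matrix.trace, Matrix.diag, hess_eq_pd]
  rw [hLHS, Finset.sum_congr rfl (fun i _ => hessP_diag hU hu hp hP hx hg i)]
  -- RHS: rewrite all pieces in terms of pd
  have hA2 : ‖gradient u x‖ ^ (p-2) = (∑ k, (pd k u x)^2) ^ (p/2-1) := by
    rw [norm_grad_rpow]
    congr 1
    ring
  have hMul : ∀ i, (hess u x).mulVec (fun j => gradient u x j / ‖gradient u x‖) i
      = (∑ k, pd k u x * pd i (pd k u) x) / ‖gradient u x‖ := by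
    intro i
    simp only [Matrix.mulVec, dotProduct, hess_eq_pd, gradient_apply_eq]
    rw [Finset.sum_div]
    exact Finset.sum_congr rfl fun k _ => by ring
  have hfrob : frobSq (hess u x) = ∑ i, ∑ k, (pd i (pd k u) x)^2 := by
    simp [frobSq, hess_eq_pd]
  have htr : ∀ y, (hess u y).trace = ∑ k, pd k (pd k u) y := fun y => by
    simp [Matrix.trace, Matrix.diag, hess_eq_pd]
  have hgradtr : ∀ i : Fin N, gradient (fun y => (hess u y).trace) x i
      = ∑ k, pd i (pd k (pd k u)) x := by
    intro i
    rw [gradient_apply_eq]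
    have h1 : (fun y => (hess u y).trace) = fun y => ∑ k, pd k (pd k u) y := funext htr
    rw [h1]
    have h2 : pd i (fun y => ∑ k, pd k (pd k u) y) x
        = (fderiv ℝ (fun y => ∑ k, pd k (pd k u) y) x) (EuclideanSpace.single i 1) := rfl
    have hdd : ∀ k ∈ (Finset.univ : Finset (Fin N)),
        DifferentiableAt ℝ (pd k (pd k u)) x := fun k _ =>
      ((pd_contDiffOn hU (pd_contDiffOn hU hu (by norm_num : (2:WithTop ℕ∞) + 1 ≤ 3) k)
        (by norm_num : (1:WithTop ℕ∞) + 1 ≤ 2) k).contDiffAt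
        (hU.mem_nhds hx)).differentiableAt (by norm_num)
    rw [h2, fderiv_fun_sum hdd]
    simp only [ContinuousLinearMap.coe_sum', Finset.sum_apply]
    rfl
  have hdot : (fun i => gradient u x i) ⬝ᵥ
      (fun i => gradient (fun y => (hess u y).trace) x i)
      = ∑ i, pd i u x * ∑ k, pd i (pd k (pd k u)) x := by
    simp only [dotProduct, gradient_apply_eq, hgradtr]
  rw [hA2, hfrob, hdot, htr x]
  simp only [hMul]
  -- split the left-hand sum
  rw [Finset.sum_add_distrib, Finset.sum_add_distrib, ← Finset.mul_sum, ← Finset.mul_sum,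
    ← Finset.mul_sum]
  have hsplit : ∑ i : Fin N, (∑ k : Fin N, ((pd i (pd k u) x)^2
        + pd k u x * pd i (pd i (pd k u)) x))
      = (∑ i : Fin N, ∑ k : Fin N, (pd i (pd k u) x)^2)
        + ∑ i : Fin N, ∑ k : Fin N, pd k u x * pd i (pd i (pd k u)) x := by
    rw [← Finset.sum_add_distrib]
    exact Finset.sum_congr rfl fun i _ => Finset.sum_add_distrib
  rw [hsplit]
  -- third-derivative symmetry
  have hW : ∑ i : Fin N, ∑ k : Fin N, pd k u x * pd i (pd i (pd k u)) x
      = ∑ i : Fin N, pd i u x * ∑ k : Fin N, pd i (pd k (pd k u)) x := by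
    rw [Finset.sum_comm]
    refine Finset.sum_congr rfl fun a _ => ?_
    rw [Finset.mul_sum]
    refine Finset.sum_congr rfl fun b _ => ?_
    rw [show pd b (pd b (pd a u)) x = pd a (pd b (pd b u)) x from
      ((sym3a hU hu hx a b b).trans (sym3b hU hu hx b a b)).symm]
  rw [hW]
  -- the squared normalized-gradient term
  have hM : ∑ i : Fin N, ((∑ k, pd k u x * pd i (pd k u) x) / ‖gradient u x‖)^2
      = (∑ i : Fin N, (∑ k, pd k u x * pd i (pd k u) x)^2) / (∑ k, (pd k u x)^2) := by
    rw [Finset.sum_div]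
    refine Finset.sum_congr rfl fun i _ => ?_
    rw [div_pow, norm_grad_sq]
  rw [hM]
  -- relate the two rpow exponents
  have hA1A2 : (∑ k, (pd k u x)^2 : ℝ) ^ (p/2-1)
      = (∑ k, (pd k u x)^2 : ℝ) ^ (p/2-2) * (∑ k, (pd k u x)^2) := by
    rw [show p/2-1 = (p/2-2) + 1 by ring, Real.rpow_add hφpos, Real.rpow_one]
  rw [hA1A2]
  field_simp
  ring
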